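/- Fix real numbers α, η, β with 1 < α < η < β, and real numbers N > 0, A > 0, B > 0. Set c_ext = −((η−α)(β−η)/(ηβα)) · ((η−α)/(β−α))^{η/(β−η)} · N^{β/(β−η)}/B^{η/(β−η)}. If c_ext < c < 0, then φ_c has exactly two critical points in (0,∞), say t⁺ < t⁻; moreover φ_c″(t⁺) > 0, φ_c″(t⁻) < 0, t⁺ is a local minimizer of φ_c, and t⁻ is a local maximizer of φ_c. -/

import Mathlib

open Set

/-- The fibering map `φ_c(t) = ((t^η/η)N − (t^β/β)B − c)/((t^α/α)A)` on `(0,∞)`. -/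
noncomputable def fib (α η β N A B c : ℝ) : ℝ → ℝ :=
  fun t => ((t ^ η / η) * N - (t ^ β / β) * B - c) / ((t ^ α / α) * A)

lemma fib_hasDerivAt (α η β N A B c : ℝ) (hα : 0 < α) (hη : 0 < η) (hβ : 0 < β)
    (hA : 0 < A) (t : ℝ) (ht : 0 < t) :
    HasDerivAt (fib α η β N A B c)
      (α / A * t ^ (-α - 1) * (N * (η - α) / η * t ^ η - B * (β - α) / β * t ^ β + c * α)) t := by
  have hηne := hη.ne'
  have hβne := hβ.ne'
  have hαne := hα.ne'
  have hAne := hA.ne'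
  have htne := ht.ne'
  have htα : (0:ℝ) < t ^ α := Real.rpow_pos_of_pos ht α
  have htαne := htα.ne'
  have hu : HasDerivAt (fun t : ℝ => (t ^ η / η) * N - (t ^ β / β) * B - c)
      ((η * t ^ (η - 1) / η) * N - (β * t ^ (β - 1) / β) * B) t :=
    ((((Real.hasDerivAt_rpow_const (Or.inl ht.ne')).div_const η).mul_const N).sub
      (((Real.hasDerivAt_rpow_const (Or.inl ht.ne')).div_const β).mul_const B)).sub_const c
  have hv : HasDerivAt (fun t : ℝ => (t ^ α / α) * A) ((α * t ^ (α - 1) / α) * A) t :=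
    ((Real.hasDerivAt_rpow_const (Or.inl ht.ne')).div_const α).mul_const A
  have hvne : (t ^ α / α) * A ≠ 0 := by positivity
  have hdiv := hu.div hv hvne
  have heq : fib α η β N A B c =
      fun t : ℝ => ((t ^ η / η) * N - (t ^ β / β) * B - c) / ((t ^ α / α) * A) := rfl
  rw [heq]
  refine hdiv.congr_deriv ?_
  have e1 : t ^ (η - 1) = t ^ η / t := by rw [Real.rpow_sub ht, Real.rpow_one]
  have e2 : t ^ (β - 1) = t ^ β / t := by rw [Real.rpow_sub ht, Real.rpow_one]
  have e3 : t ^ (α - 1) = t ^ α / t := by rw [Real.rpow_sub ht, Real.rpow_one]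
  have e4 : t ^ (-α - 1) = 1 / (t ^ α * t) := by
    rw [show -α - 1 = -(α + 1) by ring, Real.rpow_neg ht.le, Real.rpow_add ht,
      Real.rpow_one, one_div]
  rw [e1, e2, e3, e4]
  field_simp
  ring

set_option maxHeartbeats 1000000 in
/-- For `N > 0`, `A > 0`, `B > 0` and
`c_ext = −((η−α)(β−η)/(ηβα))·((η−α)/(β−α))^{η/(β−η)}·N^{β/(β−η)}/B^{η/(β−η)}`,
if `c_ext < c < 0` then `φ_c` has exactly two critical points `t⁺ < t⁻` in `(0,∞)`,
with `φ_c″(t⁺) > 0`, `φ_c″(t⁻) < 0`, `t⁺` a local minimizer and `t⁻` a local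
maximizer of `φ_c`. -/
theorem stmt7 (α η β N A B : ℝ) (h1 : 1 < α) (h2 : α < η) (h3 : η < β)
    (hN : 0 < N) (hA : 0 < A) (hB : 0 < B) (c : ℝ)
    (hcl : -((η - α) * (β - η) / (η * β * α)) * ((η - α) / (β - α)) ^ (η / (β - η)) *
        (N ^ (β / (β - η)) / B ^ (η / (β - η))) < c)
    (hcu : c < 0) :
    ∃ tp tm : ℝ, 0 < tp ∧ tp < tm ∧
      deriv (fib α η β N A B c) tp = 0 ∧ deriv (fib α η β N A B c) tm = 0 ∧
      (∀ t : ℝ, 0 < t → deriv (fib α η β N A B c) t = 0 → t = tp ∨ t = tm) ∧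
      0 < deriv (deriv (fib α η β N A B c)) tp ∧
      deriv (deriv (fib α η β N A B c)) tm < 0 ∧
      IsLocalMin (fib α η β N A B c) tp ∧ IsLocalMax (fib α η β N A B c) tm := by
  have hα : 0 < α := zero_lt_one.trans h1
  have hη : 0 < η := hα.trans h2
  have hβ : 0 < β := hη.trans h3
  have hηα : 0 < η - α := sub_pos.2 h2
  have hβη : 0 < β - η := sub_pos.2 h3
  have hβα : 0 < β - α := sub_pos.2 (h2.trans h3)
  obtain ⟨a, ha_def⟩ : ∃ a : ℝ, a = N * (η - α) / η := ⟨_, rfl⟩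
  obtain ⟨b, hb_def⟩ : ∃ b : ℝ, b = B * (β - α) / β := ⟨_, rfl⟩
  have ha : 0 < a := by rw [ha_def]; positivity
  have hb : 0 < b := by rw [hb_def]; positivity
  obtain ⟨χ, hχ_def⟩ : ∃ χ : ℝ → ℝ, χ = fun t => a * t ^ η - b * t ^ β + c * α := ⟨_, rfl⟩
  have hab : 0 < a * η / (b * β) := div_pos (mul_pos ha hη) (mul_pos hb hβ)
  obtain ⟨ts, hts_def⟩ : ∃ ts : ℝ, ts = (a * η / (b * β)) ^ (1 / (β - η)) := ⟨_, rfl⟩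
  have hts : 0 < ts := hts_def ▸ Real.rpow_pos_of_pos hab _
  have hts_pow : ts ^ (β - η) = a * η / (b * β) := by
    rw [hts_def, one_div, Real.rpow_inv_rpow hab.le hβη.ne']
  -- derivative of χ
  have hχd : ∀ t : ℝ, 0 < t →
      HasDerivAt χ (a * (η * t ^ (η - 1)) - b * (β * t ^ (β - 1))) t := by
    intro t ht
    have h1' := (Real.hasDerivAt_rpow_const (x := t) (p := η) (Or.inl ht.ne')).const_mul a
    have h2' := (Real.hasDerivAt_rpow_const (x := t) (p := β) (Or.inl ht.ne')).const_mul b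
    rw [hχ_def]
    exact (h1'.sub h2').add_const (c * α)
  have hχd_pos : ∀ t : ℝ, 0 < t → t < ts →
      0 < a * (η * t ^ (η - 1)) - b * (β * t ^ (β - 1)) := by
    intro t ht hlt
    have hsplit : t ^ (β - 1) = t ^ (η - 1) * t ^ (β - η) := by
      rw [← Real.rpow_add ht, show η - 1 + (β - η) = β - 1 by ring]
    have h2' : t ^ (β - η) < a * η / (b * β) := by
      rw [← hts_pow]; exact Real.rpow_lt_rpow ht.le hlt hβη
    have h4 : b * β * t ^ (β - η) < a * η := by
      rw [lt_div_iff₀ (by positivity)] at h2'; linarith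
    have h3 : (0:ℝ) < t ^ (η - 1) := Real.rpow_pos_of_pos ht _
    rw [hsplit]
    nlinarith [mul_pos h3 (sub_pos.2 h4)]
  have hχd_neg : ∀ t : ℝ, ts < t →
      a * (η * t ^ (η - 1)) - b * (β * t ^ (β - 1)) < 0 := by
    intro t hlt
    have ht : 0 < t := hts.trans hlt
    have hsplit : t ^ (β - 1) = t ^ (η - 1) * t ^ (β - η) := by
      rw [← Real.rpow_add ht, show η - 1 + (β - η) = β - 1 by ring]
    have h2' : a * η / (b * β) < t ^ (β - η) := by
      rw [← hts_pow]; exact Real.rpow_lt_rpow hts.le hlt hβη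
    have h4 : a * η < b * β * t ^ (β - η) := by
      rw [div_lt_iff₀ (by positivity)] at h2'; linarith
    have h3 : (0:ℝ) < t ^ (η - 1) := Real.rpow_pos_of_pos ht _
    rw [hsplit]
    nlinarith [mul_pos h3 (sub_pos.2 h4)]
  have hχc : Continuous χ := by
    rw [hχ_def]
    exact ((continuous_const.mul (Real.continuous_rpow_const hη.le)).sub
      (continuous_const.mul (Real.continuous_rpow_const hβ.le))).add continuous_const
  have hmono : StrictMonoOn χ (Icc 0 ts) := by
    apply strictMonoOn_of_deriv_pos (convex_Icc 0 ts) hχc.continuousOn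
    intro t htm
    rw [interior_Icc] at htm
    rw [(hχd t htm.1).deriv]
    exact hχd_pos t htm.1 htm.2
  have hanti : StrictAntiOn χ (Ici ts) := by
    apply strictAntiOn_of_deriv_neg (convex_Ici ts) hχc.continuousOn
    intro t htm
    rw [interior_Ici] at htm
    rw [(hχd t (hts.trans htm)).deriv]
    exact hχd_neg t htm
  -- value at ts
  have hts_eta : (0:ℝ) < ts ^ η := Real.rpow_pos_of_pos hts η
  have hχts_eq : χ ts = a * ts ^ η * (β - η) / β + c * α := by
    have hbeta : ts ^ β = ts ^ η * (a * η / (b * β)) := by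
      rw [← hts_pow, ← Real.rpow_add hts, show η + (β - η) = β by ring]
    rw [hχ_def]
    simp only
    rw [hbeta]
    field_simp
  have hts_eta_eq : ts ^ η = ((η - α) / (β - α)) ^ (η / (β - η)) *
      (N ^ (η / (β - η)) / B ^ (η / (β - η))) := by
    have habe : a * η / (b * β) = (η - α) / (β - α) * (N / B) := by
      rw [ha_def, hb_def]; field_simp
    rw [hts_def, ← Real.rpow_mul hab.le, show 1 / (β - η) * η = η / (β - η) by ring,
      habe, Real.mul_rpow (by positivity) (by positivity), Real.div_rpow hN.le hB.le]
  have hcext : -((η - α) * (β - η) / (η * β * α)) * ((η - α) / (β - α)) ^ (η / (β - η)) *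
      (N ^ (β / (β - η)) / B ^ (η / (β - η))) = -(a * (β - η) / (β * α)) * ts ^ η := by
    rw [hts_eta_eq, ha_def]
    have hNsplit : N ^ (β / (β - η)) = N * N ^ (η / (β - η)) := by
      have he : β / (β - η) = 1 + η / (β - η) := by field_simp; ring
      rw [he, Real.rpow_add hN, Real.rpow_one]
    rw [hNsplit]
    field_simp
  have hχts_pos : 0 < χ ts := by
    rw [hχts_eq]
    rw [hcext] at hcl
    have h5 : -(a * (β - η) / (β * α)) * ts ^ η * α = -(a * ts ^ η * (β - η) / β) := by
      field_simp
    have h6 := mul_lt_mul_of_pos_right hcl hα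
    rw [h5] at h6
    linarith
  have hχ0 : χ 0 = c * α := by
    rw [hχ_def]; simp [Real.zero_rpow hη.ne', Real.zero_rpow hβ.ne']
  have hca : c * α < 0 := mul_neg_of_neg_of_pos hcu hα
  -- existence of tp
  obtain ⟨tp, htp_mem, htp⟩ : ∃ tp ∈ Ioo (0:ℝ) ts, χ tp = 0 := by
    have h0 : (0:ℝ) ∈ Ioo (χ 0) (χ ts) := ⟨by rw [hχ0]; exact hca, hχts_pos⟩
    obtain ⟨tp, hmem, heq⟩ := intermediate_value_Ioo hts.le hχc.continuousOn h0
    exact ⟨tp, hmem, heq⟩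
  -- existence of tm
  obtain ⟨T, hTts, hχT⟩ : ∃ T : ℝ, ts < T ∧ χ T < 0 := by
    have hgen : ∀ T : ℝ, 0 < T → a / b < T ^ (β - η) → χ T < 0 := by
      intro T hTpos h8
      have h9 : a < b * T ^ (β - η) := by
        rw [div_lt_iff₀ hb] at h8; linarith
      have h10 : T ^ β = T ^ η * T ^ (β - η) := by
        rw [← Real.rpow_add hTpos, show η + (β - η) = β by ring]
      have h11 : (0:ℝ) < T ^ η := Real.rpow_pos_of_pos hTpos η
      rw [hχ_def]
      simp only
      rw [h10]
      nlinarith [mul_pos h11 (sub_pos.2 h9)]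
    refine ⟨max ts ((a / b) ^ (1 / (β - η))) + 1,
      lt_of_le_of_lt (le_max_left _ _) (lt_add_one _), ?_⟩
    have hTpos : 0 < max ts ((a / b) ^ (1 / (β - η))) + 1 :=
      hts.trans (lt_of_le_of_lt (le_max_left _ _) (lt_add_one _))
    apply hgen _ hTpos
    have h7 : (a / b) ^ (1 / (β - η)) < max ts ((a / b) ^ (1 / (β - η))) + 1 :=
      (le_max_right _ _).trans_lt (lt_add_one _)
    calc a / b = ((a / b) ^ (1 / (β - η))) ^ (β - η) := by
          rw [one_div, Real.rpow_inv_rpow (div_pos ha hb).le hβη.ne']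
      _ < _ := Real.rpow_lt_rpow (Real.rpow_nonneg (div_pos ha hb).le _) h7 hβη
  obtain ⟨tm, htm_mem, htm⟩ : ∃ tm ∈ Ioo ts T, χ tm = 0 := by
    have h0 : (0:ℝ) ∈ Ioo (χ T) (χ ts) := ⟨hχT, hχts_pos⟩
    obtain ⟨tm, hmem, heq⟩ := intermediate_value_Ioo' hTts.le hχc.continuousOn h0
    exact ⟨tm, hmem, heq⟩
  have htm_pos : 0 < tm := hts.trans htm_mem.1
  -- derivative of fib
  have hfib : ∀ t : ℝ, 0 < t →
      HasDerivAt (fib α η β N A B c) (α / A * t ^ (-α - 1) * χ t) t := by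
    intro t ht
    have h := fib_hasDerivAt α η β N A B c hα hη hβ hA t ht
    simp only [hχ_def, ha_def, hb_def]
    exact h
  have hderiv : ∀ t : ℝ, 0 < t →
      deriv (fib α η β N A B c) t = α / A * t ^ (-α - 1) * χ t :=
    fun t ht => (hfib t ht).deriv
  have hcrit : ∀ t : ℝ, 0 < t → deriv (fib α η β N A B c) t = 0 → χ t = 0 := by
    intro t ht h
    rw [hderiv t ht] at h
    have hne : α / A * t ^ (-α - 1) ≠ 0 := by
      have : (0:ℝ) < t ^ (-α - 1) := Real.rpow_pos_of_pos ht _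
      positivity
    exact (mul_eq_zero.1 h).resolve_left hne
  have htp_lt_tm : tp < tm := htp_mem.2.trans htm_mem.1
  -- second derivative
  have hD2 : ∀ t0 : ℝ, 0 < t0 → deriv (deriv (fib α η β N A B c)) t0 =
      α / A * ((-α - 1) * t0 ^ (-α - 1 - 1) * χ t0 +
        t0 ^ (-α - 1) * (a * (η * t0 ^ (η - 1)) - b * (β * t0 ^ (β - 1)))) := by
    intro t0 ht0
    have hev : deriv (fib α η β N A B c) =ᶠ[nhds t0]
        fun t => α / A * (t ^ (-α - 1) * χ t) := by
      filter_upwards [Ioi_mem_nhds ht0] with t ht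
      rw [hderiv t ht]; ring
    rw [hev.deriv_eq]
    have hp := Real.hasDerivAt_rpow_const (x := t0) (p := -α - 1) (Or.inl ht0.ne')
    have hmul := (hp.mul (hχd t0 ht0)).const_mul (α / A)
    exact hmul.deriv
  have h2tp : 0 < deriv (deriv (fib α η β N A B c)) tp := by
    rw [hD2 tp htp_mem.1, htp, mul_zero, zero_add]
    have hd := hχd_pos tp htp_mem.1 htp_mem.2
    have hpow : (0:ℝ) < tp ^ (-α - 1) := Real.rpow_pos_of_pos htp_mem.1 _
    have hq : (0:ℝ) < α / A := by positivity
    exact mul_pos hq (mul_pos hpow hd)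
  have h2tm : deriv (deriv (fib α η β N A B c)) tm < 0 := by
    rw [hD2 tm htm_pos, htm, mul_zero, zero_add]
    have hd := hχd_neg tm htm_mem.1
    have hpow : (0:ℝ) < tm ^ (-α - 1) := Real.rpow_pos_of_pos htm_pos _
    have hq : (0:ℝ) < α / A := by positivity
    exact mul_neg_of_pos_of_neg hq (mul_neg_of_pos_of_neg hpow hd)
  -- sign of deriv fib
  have hfac : ∀ t : ℝ, 0 < t → 0 < α / A * t ^ (-α - 1) := by
    intro t ht
    have : (0:ℝ) < t ^ (-α - 1) := Real.rpow_pos_of_pos ht _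
    positivity
  -- local min at tp
  have hmin : IsLocalMin (fib α η β N A B c) tp := by
    have h0 : 0 < tp / 2 := by linarith [htp_mem.1]
    apply isLocalMin_of_deriv_Ioo (a := tp / 2) (c := ts)
      (by linarith [htp_mem.1]) htp_mem.2 (hfib tp htp_mem.1).continuousAt
    · intro x hx
      exact ((hfib x (h0.trans hx.1)).differentiableAt).differentiableWithinAt
    · intro x hx
      exact ((hfib x (htp_mem.1.trans hx.1)).differentiableAt).differentiableWithinAt
    · intro x hx
      have hx0 : 0 < x := h0.trans hx.1
      rw [hderiv x hx0]
      have hχx : χ x < 0 := by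
        have := hmono ⟨hx0.le, (hx.2.trans htp_mem.2).le⟩ ⟨htp_mem.1.le, htp_mem.2.le⟩ hx.2
        rw [htp] at this; exact this
      exact le_of_lt (mul_neg_of_pos_of_neg (hfac x hx0) hχx)
    · intro x hx
      have hx0 : 0 < x := htp_mem.1.trans hx.1
      rw [hderiv x hx0]
      have hχx : 0 < χ x := by
        have := hmono ⟨htp_mem.1.le, htp_mem.2.le⟩ ⟨hx0.le, hx.2.le⟩ hx.1
        rw [htp] at this; exact this
      exact le_of_lt (mul_pos (hfac x hx0) hχx)
  -- local max at tm
  have hmax : IsLocalMax (fib α η β N A B c) tm := by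
    apply isLocalMax_of_deriv_Ioo (a := ts) (c := tm + 1)
      htm_mem.1 (lt_add_one _) (hfib tm htm_pos).continuousAt
    · intro x hx
      exact ((hfib x (hts.trans hx.1)).differentiableAt).differentiableWithinAt
    · intro x hx
      exact ((hfib x (htm_pos.trans hx.1)).differentiableAt).differentiableWithinAt
    · intro x hx
      have hx0 : 0 < x := hts.trans hx.1
      rw [hderiv x hx0]
      have hχx : 0 < χ x := by
        have := hanti (le_of_lt hx.1) (le_of_lt htm_mem.1) hx.2
        rw [htm] at this; exact this
      exact le_of_lt (mul_pos (hfac x hx0) hχx)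
    · intro x hx
      have hx0 : 0 < x := htm_pos.trans hx.1
      rw [hderiv x hx0]
      have hχx : χ x < 0 := by
        have := hanti (le_of_lt htm_mem.1) (le_of_lt (htm_mem.1.trans hx.1)) hx.1
        rw [htm] at this; exact this
      exact le_of_lt (mul_neg_of_pos_of_neg (hfac x hx0) hχx)
  refine ⟨tp, tm, htp_mem.1, htp_lt_tm, ?_, ?_, ?_, h2tp, h2tm, hmin, hmax⟩
  · rw [hderiv tp htp_mem.1, htp, mul_zero]
  · rw [hderiv tm htm_pos, htm, mul_zero]
  · intro t ht hd
    have hχt := hcrit t ht hd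
    rcases le_or_gt t ts with hle | hlt
    · left
      exact hmono.injOn ⟨ht.le, hle⟩ ⟨htp_mem.1.le, htp_mem.2.le⟩ (by rw [hχt, htp])
    · right
      exact hanti.injOn (le_of_lt hlt) (le_of_lt htm_mem.1) (by rw [hχt, htm])
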